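/- Let n = 2m, let t be a positive integer with d = gcd(t, n) such that n/d is even, and let λ ∈ F_{2^n} with λ ∉ S, where S = { x^{2^t+1} : x ∈ F_{2^n} }. Let μ_2, …, μ_r ∈ F_{2^n} be nonzero elements such that Tr(λ(μ_i^{2^t} μ_j + μ_i μ_j^{2^t})) = 0 for all 2 ≤ i < j ≤ r, and let α ∈ F_{2^n} satisfy Tr(α μ_i) = 0 for all 2 ≤ i ≤ r. Then for every Boolean function F : F_2^r → F_2, the function h*(x) = Tr(λ x^{2^t+1}) + F(Tr(α x), φ_2(x), φ_3(x), …, φ_r(x)) is bent, where φ_i(x) = Tr(λ(μ_i x^{2^t} + μ_i^{2^t} x + μ_i^{2^t+1})) for 2 ≤ i ≤ r. -/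

import Mathlib

noncomputable section

noncomputable instance (n : ℕ) : Fintype (GaloisField 2 n) := Fintype.ofFinite _

/-- `(-1)^c` for `c ∈ F_2`. -/
def sgn (c : ZMod 2) : ℤ := if c = 0 then 1 else -1

/-- The absolute trace `Tr : F_{2^n} → F_2`. -/
def Tr {n : ℕ} (x : GaloisField 2 n) : ZMod 2 :=
  Algebra.trace (ZMod 2) (GaloisField 2 n) x

/-- Walsh–Hadamard transform of a Boolean function on `F_{2^n}`. -/
def walsh {n : ℕ} (f : GaloisField 2 n → ZMod 2) (μ : GaloisField 2 n) : ℤ :=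
  ∑ x : GaloisField 2 n, sgn (f x + Tr (μ * x))

/-- `f` is bent (where `n = 2m`): all Walsh coefficients are `±2^m`. -/
def IsBent {n : ℕ} (m : ℕ) (f : GaloisField 2 n → ZMod 2) : Prop :=
  ∀ μ, walsh f μ = 2 ^ m ∨ walsh f μ = -(2 ^ m)

/-- `fs` is the dual of the bent function `f` (where `n = 2m`). -/
def IsDualOf {n : ℕ} (m : ℕ) (fs f : GaloisField 2 n → ZMod 2) : Prop :=
  ∀ μ, walsh f μ = 2 ^ m * sgn (fs μ)

/-! ### Auxiliary lemmas -/

theorem sgn_add (a b : ZMod 2) : sgn (a + b) = sgn a * sgn b := by revert a b; decide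

theorem sgn_sq (a : ZMod 2) : sgn a * sgn a = 1 := by revert a; decide

theorem sgn_cases (a : ZMod 2) : sgn a = 1 ∨ sgn a = -1 := by revert a; decide

theorem zmod2_ne (z : ZMod 2) (h : z ≠ 0) : z = 1 := by revert z; decide

theorem zmod2_cases (z : ZMod 2) : z = 0 ∨ z = 1 := by revert z; decide

theorem Tr_add {n : ℕ} (x y : GaloisField 2 n) : Tr (x + y) = Tr x + Tr y := by
  simp [Tr, map_add]

theorem Tr_sum {n : ℕ} {ι : Type*} (s : Finset ι) (g : ι → GaloisField 2 n) :
    Tr (∑ i ∈ s, g i) = ∑ i ∈ s, Tr (g i) := by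
  simp [Tr, map_sum]

theorem sum_sgn_eq_zero {A : Type*} [AddCommGroup A] [Fintype A] (φ : A → ZMod 2)
    (hadd : ∀ x y, φ (x + y) = φ x + φ y) (y : A) (hy : φ y = 1) :
    ∑ a, sgn (φ a) = 0 := by
  have h1 : ∑ a, sgn (φ a) = ∑ a, sgn (φ (y + a)) :=
    (Fintype.sum_equiv (Equiv.addLeft y) _ _ (fun a => rfl)).symm
  have h2 : ∀ a, sgn (φ (y + a)) = - sgn (φ a) := by
    intro a; rw [hadd, hy, sgn_add]; show (-1 : ℤ) * _ = _; ring
  simp_rw [h2] at h1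
  rw [Finset.sum_neg_distrib] at h1
  omega

theorem char_sum_ne {n : ℕ} (c : GaloisField 2 n) (h : c ≠ 0) :
    ∑ x, sgn (Tr (c * x)) = 0 := by
  have hnd := traceForm_nondegenerate (ZMod 2) (GaloisField 2 n)
  have : ∃ y, Tr (c * y) ≠ 0 := by
    by_contra hc
    push_neg at hc
    refine h (hnd.1 c (fun y => ?_))
    rw [Algebra.traceForm_apply]
    exact hc y
  obtain ⟨y, hy⟩ := this
  exact sum_sgn_eq_zero (fun x => Tr (c * x))
    (fun x y => by show Tr (c * (x + y)) = Tr (c * x) + Tr (c * y); rw [mul_add, Tr_add]) y (zmod2_ne _ hy)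

theorem char_sum_pi_ne {r : ℕ} (c : Fin r → ZMod 2) (h : c ≠ 0) :
    ∑ u : Fin r → ZMod 2, sgn (∑ i, u i * c i) = 0 := by
  have : ∃ j, c j ≠ 0 := by
    by_contra hc; push_neg at hc; exact h (funext hc)
  obtain ⟨j, hj⟩ := this
  apply sum_sgn_eq_zero (fun u => ∑ i, u i * c i)
    (fun x y => by simp [add_mul, Finset.sum_add_distrib]) (Pi.single j 1)
  rw [Finset.sum_eq_single j]
  · simpa using zmod2_ne _ hj
  · intro b _ hb; simp [Pi.single_apply, hb]
  · simp

/-- Frobenius as an algebra equivalence over `ZMod 2`. -/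
def frobAlg (n : ℕ) : GaloisField 2 n ≃ₐ[ZMod 2] GaloisField 2 n :=
  AlgEquiv.ofRingEquiv (f := frobeniusEquiv (GaloisField 2 n) 2)
    (fun r => by
      show frobenius _ 2 _ = _
      rw [frobenius_def, ← map_pow]; congr 1; revert r; decide)

theorem Tr_sq {n : ℕ} (x : GaloisField 2 n) : Tr (x ^ 2) = Tr x := by
  have := Algebra.trace_eq_of_algEquiv (frobAlg n) x
  simpa [Tr, frobAlg, frobenius_def] using this

theorem Tr_pow2 {n : ℕ} (j : ℕ) (x : GaloisField 2 n) : Tr (x ^ (2 ^ j)) = Tr x := by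
  induction j generalizing x with
  | zero => simp
  | succ j ih => rw [pow_succ, pow_mul, Tr_sq] at *; exact ih x

theorem pow_gcd_aux {G : Type*} [Group G] (w : G) :
    ∀ a, ∀ b, w ^ (2^a - 1) = 1 → w ^ (2^b - 1) = 1 → w ^ (2^(Nat.gcd a b) - 1) = 1 := by
  intro a
  induction a using Nat.strong_induction_on with
  | _ a ih =>
    intro b ha hb
    rcases Nat.eq_zero_or_pos a with rfl | hpos
    · simpa [Nat.gcd_zero_left] using hb
    · rw [Nat.gcd_rec]
      apply ih (b % a) (Nat.mod_lt b hpos) a ?_ ha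
      set r := b % a with hr
      set q := b / a with hq
      have hb' : b = a * q + r := (Nat.div_add_mod b a).symm
      have hd : (2:ℕ)^a - 1 ∣ 2^(a*q) - 1 := by
        have := Nat.sub_dvd_pow_sub_pow (2^a) 1 q
        simpa [← pow_mul, one_pow] using this
      have h1 : w ^ ((2:ℕ)^(a*q) - 1) = 1 := by
        obtain ⟨k, hk⟩ := hd
        rw [hk, pow_mul, ha, one_pow]
      have h2 : w ^ ((2:ℕ)^r * (2^(a*q) - 1)) = 1 := by
        rw [mul_comm, pow_mul, h1, one_pow]
      have hsplit : (2:ℕ)^r * (2^(a*q) - 1) + (2^r - 1) = 2^b - 1 := by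
        have h1' : (1:ℕ) ≤ 2^(a*q) := Nat.one_le_two_pow
        have h2' : (1:ℕ) ≤ 2^r := Nat.one_le_two_pow
        have h3 : (2:ℕ)^b = 2^r * 2^(a*q) := by rw [← pow_add, hb']; ring_nf
        rw [h3]
        have h4 : (1:ℕ) ≤ 2^r * 2^(a*q) := Nat.one_le_iff_ne_zero.2 (by positivity)
        zify [h1', h2', h4]
        ring
      have := congrArg (fun x => x * (w ^ ((2:ℕ)^r * (2^(a*q) - 1)))⁻¹)
        (hsplit ▸ hb : w ^ ((2:ℕ)^r * (2^(a*q) - 1) + (2^r - 1)) = 1)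
      simp only [pow_add, h2, one_mul, mul_inv_cancel_left, inv_one, mul_one] at this ⊢
      rw [← this]

theorem coprime_aux {t d : ℕ} (hd : d ∣ t) (hd0 : 0 < d) (ht : 0 < t) :
    Nat.Coprime (2^t + 1) (2^d - 1) := by
  have h1 : (2:ℕ)^d - 1 ∣ 2^t - 1 := by
    obtain ⟨k, rfl⟩ := hd
    have := Nat.sub_dvd_pow_sub_pow (2^d) 1 k
    simpa [← pow_mul, one_pow] using this
  have h2 : (2:ℕ)^t ≥ 1 := Nat.one_le_two_pow
  set g := Nat.gcd (2^t + 1) (2^d - 1) with hg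
  have hga : g ∣ 2^t + 1 := Nat.gcd_dvd_left _ _
  have hgb : g ∣ 2^d - 1 := Nat.gcd_dvd_right _ _
  have hgc : g ∣ 2^t - 1 := hgb.trans h1
  have hg2 : g ∣ 2 := by
    have := Nat.dvd_sub hga hgc
    simpa [show 2^t + 1 - (2^t - 1) = 2 by omega] using this
  have hodd : ¬ (2 ∣ (2:ℕ)^d - 1) := by
    have : (2:ℕ) ∣ 2^d := dvd_pow_self 2 hd0.ne'
    have h3 : (2:ℕ)^d ≥ 2 := by
      calc (2:ℕ) = 2^1 := rfl
      _ ≤ 2^d := Nat.pow_le_pow_right (by norm_num) hd0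
    omega
  have hle : g ≤ 2 := Nat.le_of_dvd (by norm_num) hg2
  interval_cases g
  · exact absurd (Nat.eq_zero_of_zero_dvd hga) (by positivity)
  · exact hg.symm
  · exact absurd hgb hodd

theorem exists_pow_root {G : Type*} [Group G] {w : G} {t d : ℕ}
    (hd0 : 0 < d) (hw : w ^ (2^d - 1) = 1) (hcop : Nat.Coprime (2^t + 1) (2^d - 1)) :
    ∃ y : G, y ^ (2^t + 1) = w := by
  have hpos : 0 < 2^d - 1 := by
    have : (2:ℕ)^d ≥ 2 := by
      calc (2:ℕ) = 2^1 := rfl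
      _ ≤ 2^d := Nat.pow_le_pow_right (by norm_num) hd0
    omega
  have hord : orderOf w ∣ 2^d - 1 := orderOf_dvd_of_pow_eq_one hw
  have hcop' : Nat.Coprime (2^t + 1) (orderOf w) := Nat.Coprime.coprime_dvd_right hord hcop
  rcases Nat.lt_or_ge (orderOf w) 2 with h | h
  · have h0 : orderOf w ≠ 0 := by
      intro h0; rw [h0] at hord; exact absurd (Nat.eq_zero_of_zero_dvd hord) (by omega)
    have h1 : orderOf w = 1 := by omega
    exact ⟨1, by rw [one_pow, (orderOf_eq_one_iff.mp h1)]⟩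
  · obtain ⟨b, -, hb⟩ := Nat.exists_mul_mod_eq_one_of_coprime hcop' h
    refine ⟨w ^ b, ?_⟩
    rw [← pow_mul, mul_comm b, ← pow_mod_orderOf, hb, pow_one]

theorem kernel_triv {n t : ℕ} (hn : n ≠ 0) (ht : 0 < t) (lam z : GaloisField 2 n)
    (hlam : lam ∉ Set.range (fun x : GaloisField 2 n => x ^ (2 ^ t + 1)))
    (hz : z ≠ 0)
    (heq : lam ^ (2^t) * z ^ (2^(2*t)) = lam * z) : False := by
  have hlam0 : lam ≠ 0 := by
    rintro rfl
    exact hlam ⟨0, by simp⟩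
  set u : (GaloisField 2 n)ˣ := Units.mk0 lam hlam0 with hu
  set v : (GaloisField 2 n)ˣ := Units.mk0 z hz with hv
  have hueq : u ^ (2^t) * v ^ (2^(2*t)) = u * v := by
    ext
    push_cast
    exact heq
  set w : (GaloisField 2 n)ˣ := u * v ^ (2^t + 1) with hw
  have hexp : (2^t + 1) * (2^t - 1) = 2^(2*t) - 1 := by
    obtain ⟨b, hb⟩ : ∃ b, 2^t = b + 1 := ⟨2^t - 1, by have := Nat.one_le_two_pow (n := t); omega⟩
    rw [two_mul, pow_add, hb]
    simp only [Nat.add_sub_cancel]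
    have h1 : (1:ℕ) ≤ (b+1)*(b+1) := Nat.one_le_iff_ne_zero.2 (by positivity)
    zify [h1]
    ring
  have hw1 : w ^ (2^t - 1) = 1 := by
    have key : w ^ (2^t - 1) * (u * v) = u * v := by
      rw [hw, mul_pow, ← pow_mul, hexp]
      have e1 : u ^ (2^t - 1) * u = u ^ (2^t) := by
        rw [← pow_succ]
        congr 1
        have := Nat.one_le_two_pow (n := t); omega
      have e2 : v ^ (2^(2*t) - 1) * v = v ^ (2^(2*t)) := by
        rw [← pow_succ]
        congr 1
        have := Nat.one_le_two_pow (n := 2*t); omega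
      calc u ^ (2^t-1) * v ^ (2^(2*t)-1) * (u * v)
          = (u ^ (2^t-1) * u) * (v ^ (2^(2*t)-1) * v) := mul_mul_mul_comm _ _ _ _
        _ = u ^ (2^t) * v ^ (2^(2*t)) := by rw [e1, e2]
        _ = u * v := hueq
    exact mul_right_cancel (key.trans (one_mul (u*v)).symm)
  have hcard : Nat.card (GaloisField 2 n)ˣ = 2^n - 1 := by
    rw [Nat.card_units, GaloisField.card _ _ hn]
  have hw2 : w ^ (2^n - 1) = 1 := by
    rw [← hcard]; exact pow_card_eq_one'
  have hd0 : 0 < Nat.gcd t n := Nat.gcd_pos_of_pos_left n ht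
  have hwd : w ^ (2^(Nat.gcd t n) - 1) = 1 := pow_gcd_aux w t n hw1 hw2
  obtain ⟨y, hy⟩ := exists_pow_root hd0 hwd (coprime_aux (Nat.gcd_dvd_left t n) hd0 ht)
  apply hlam
  refine ⟨((y * v⁻¹ : (GaloisField 2 n)ˣ) : GaloisField 2 n), ?_⟩
  have hyy : (y * v⁻¹) ^ (2^t + 1) = u := by
    rw [mul_pow, hy, hw]
    group
  calc ((y * v⁻¹ : (GaloisField 2 n)ˣ) : GaloisField 2 n) ^ (2^t+1)
      = (((y * v⁻¹) ^ (2^t+1) : (GaloisField 2 n)ˣ) : GaloisField 2 n) := by push_cast; ring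
    _ = lam := by rw [hyy]; rfl

theorem card2n {n : ℕ} (hn : n ≠ 0) : Fintype.card (GaloisField 2 n) = 2^n := by
  rw [← Nat.card_eq_fintype_card, GaloisField.card _ _ hn]

theorem pow_two_pow_card {n : ℕ} (hn : n ≠ 0) (x : GaloisField 2 n) (j : ℕ) :
    x ^ (2^(n*j)) = x := by
  induction j with
  | zero => simp
  | succ j ih =>
    have hc : x ^ (2^n) = x := by
      have := FiniteField.pow_card x (K := GaloisField 2 n)
      rwa [card2n hn] at this
    rw [Nat.mul_succ, pow_add, pow_mul, ih, hc]

theorem goldSq {n m t : ℕ} (hn : n = 2*m) (hn0 : n ≠ 0) (ht : 0 < t)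
    (lam : GaloisField 2 n)
    (hlam : lam ∉ Set.range (fun x : GaloisField 2 n => x ^ (2 ^ t + 1)))
    (μ : GaloisField 2 n) :
    (walsh (fun x => Tr (lam * x ^ (2^t+1))) μ) ^ 2 = 2 ^ n := by
  classical
  set q : ℕ := 2^t with hq
  set s' : ℕ := t*(n-1) with hs'
  set f : GaloisField 2 n → ZMod 2 := fun x => Tr (lam * x ^ (q+1)) with hf
  set c : GaloisField 2 n → GaloisField 2 n := fun z => lam * z^q + (lam*z)^(2^s') with hc
  have hts' : t + s' = n * t := by
    rw [hs']
    cases n with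
    | zero => exact absurd rfl hn0
    | succ n' => simp only [Nat.add_sub_cancel]; ring
  have hexp2 : (2:ℕ)^s' * 2^t = 2^(n*t) := by rw [← pow_add, add_comm, hts']
  have hfe : ∀ x, f x = Tr (lam * x ^ (q+1)) := fun _ => rfl
  have hce : ∀ z, c z = lam * z^q + (lam*z)^(2^s') := fun _ => rfl
  have E3 : ∀ x z : GaloisField 2 n,
      Tr (c z * x) = Tr (lam*(x^q*z)) + Tr (lam*(x*z^q)) := by
    intro x z
    rw [hce, add_mul, Tr_add]
    have hx : (x^q)^(2^s') = x := by
      rw [← pow_mul, hq, ← pow_add, hts', pow_two_pow_card hn0]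
    have h3 : (lam*(x^q*z))^(2^s') = (lam*z)^(2^s') * x := by
      rw [mul_pow, mul_pow, hx, mul_pow]
      ring
    have h2 : Tr ((lam*z)^(2^s') * x) = Tr (lam*(x^q*z)) := by
      rw [← Tr_pow2 s' (lam*(x^q*z)), h3]
    rw [h2, show lam * z^q * x = lam * (x*z^q) by ring]
    ring
  have E1 : ∀ x z : GaloisField 2 n, Tr (lam*(x+z)^(q+1)) =
      Tr (lam*x^(q+1)) + Tr (lam*z^(q+1)) + (Tr (lam*(x^q*z)) + Tr (lam*(x*z^q))) := by
    intro x z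
    have hfr : (x+z)^q = x^q + z^q := add_pow_char_pow x z 2 t
    have he : lam*(x+z)^(q+1) =
        lam*x^(q+1) + lam*z^(q+1) + (lam*(x^q*z) + lam*(x*z^q)) := by
      rw [pow_succ, hfr, pow_succ, pow_succ]
      ring
    rw [he, Tr_add, Tr_add, Tr_add]
  have E2 : ∀ x z : GaloisField 2 n, Tr (μ*(x+z)) = Tr (μ*x) + Tr (μ*z) := by
    intro x z; rw [mul_add, Tr_add]
  have hker : ∀ z, c z = 0 → z = 0 := by
    intro z hz0
    by_contra hz
    apply kernel_triv hn0 ht lam z hlam hz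
    have h5 : lam * z^q = (lam*z)^(2^s') := by
      rw [hce] at hz0
      have := CharTwo.neg_eq ((lam*z)^(2^s'))
      rw [add_eq_zero_iff_eq_neg, this] at hz0
      exact hz0
    have h7 : (lam * z^q)^(2^t) = ((lam*z)^(2^s'))^(2^t) := by rw [h5]
    have h8 : ((lam*z)^(2^s'))^(2^t) = lam * z := by
      rw [← pow_mul, hexp2, pow_two_pow_card hn0]
    rw [h8, mul_pow, ← pow_mul, hq, ← pow_add, show t + t = 2*t by ring] at h7
    exact h7
  have expand : (walsh f μ)^2 =
      ∑ x : GaloisField 2 n, ∑ z : GaloisField 2 n,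
        sgn (f x + Tr (μ*x)) * sgn (f (x+z) + Tr (μ*(x+z))) := by
    rw [pow_two, walsh, Finset.sum_mul_sum]
    apply Finset.sum_congr rfl
    intro x _
    exact (Fintype.sum_equiv (Equiv.addLeft x) _ _ (fun z => by simp)).symm
  have step : ∀ x z : GaloisField 2 n,
      sgn (f x + Tr (μ*x)) * sgn (f (x+z) + Tr (μ*(x+z))) =
      sgn (f z + Tr (μ*z)) * sgn (Tr (c z * x)) := by
    intro x z
    rw [hfe, hfe, hfe, E1 x z, E2 x z, E3 x z]
    simp only [sgn_add]
    linear_combination (sgn (Tr (lam*z^(q+1))) * sgn (Tr (lam*(x^q*z))) * sgn (Tr (lam*(x*z^q)))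
        * sgn (Tr (μ*z)) * (sgn (Tr (μ*x)))^2) * sgn_sq (Tr (lam*x^(q+1)))
      + (sgn (Tr (lam*z^(q+1))) * sgn (Tr (lam*(x^q*z))) * sgn (Tr (lam*(x*z^q)))
        * sgn (Tr (μ*z))) * sgn_sq (Tr (μ*x))
  rw [expand]
  simp_rw [step]
  rw [Finset.sum_comm]
  have inner : ∀ z : GaloisField 2 n,
      (∑ x : GaloisField 2 n, sgn (f z + Tr (μ*z)) * sgn (Tr (c z * x))) =
      if z = 0 then (2:ℤ)^n else 0 := by
    intro z
    rw [← Finset.mul_sum]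
    by_cases hz : z = 0
    · subst hz
      rw [if_pos rfl]
      have hc0 : c 0 = 0 := by
        rw [hce]
        simp [zero_pow (show q ≠ 0 by positivity), zero_pow (show (2:ℕ)^s' ≠ 0 by positivity)]
      have hz0 : f 0 + Tr (μ*0) = 0 := by
        rw [hfe]
        simp [Tr, zero_pow (Nat.succ_ne_zero q)]
      rw [hz0, hc0]
      simp only [zero_mul]
      have hT0 : Tr (0 : GaloisField 2 n) = 0 := by simp [Tr]
      rw [hT0]
      show sgn 0 * ∑ _x : GaloisField 2 n, sgn 0 = _
      simp [sgn, Finset.card_univ, card2n hn0]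
    · rw [if_neg hz]
      have hcz : c z ≠ 0 := fun h => hz (hker z h)
      rw [char_sum_ne (c z) hcz]
      ring
  simp_rw [inner]
  simp

theorem gold_bent {n m t : ℕ} (hn : n = 2*m) (hn0 : n ≠ 0) (ht : 0 < t)
    (lam : GaloisField 2 n)
    (hlam : lam ∉ Set.range (fun x : GaloisField 2 n => x ^ (2 ^ t + 1))) :
    IsBent m (fun x => Tr (lam * x ^ (2^t+1))) := by
  intro μ
  have hsq := goldSq hn hn0 ht lam hlam μ
  set W := walsh (fun x => Tr (lam * x ^ (2^t+1))) μ with hW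
  have h2 : (W - 2^m) * (W + 2^m) = 0 := by
    have : (2:ℤ)^n = (2^m)^2 := by rw [hn, ← pow_mul, two_mul]; ring_nf
    rw [this] at hsq
    linear_combination hsq
  rcases mul_eq_zero.mp h2 with h | h
  · left; linarith
  · right; linarith

open Polynomial in
theorem deg_case (t : ℕ) (lam : GaloisField 2 0)
    (hlam : lam ∉ Set.range (fun x : GaloisField 2 0 => x ^ (2 ^ t + 1))) : False := by
  have hsf : Polynomial.IsSplittingField (ZMod 2) (GaloisField 2 0)
      (X ^ (2:ℕ) ^ (0:ℕ) - X) := instIsSplittingFieldZModGaloisFieldHSubPolynomialHPowNatX 2 0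
  have h0 : (X ^ (2:ℕ) ^ (0:ℕ) - X : Polynomial (ZMod 2)) = 0 := by
    simp
  rw [h0] at hsf
  have hadj := hsf.adjoin_rootSet
  rw [Polynomial.rootSet_zero, Algebra.adjoin_empty] at hadj
  have hsurj : ∃ r : ZMod 2, algebraMap (ZMod 2) (GaloisField 2 0) r = lam := by
    have : lam ∈ (⊥ : Subalgebra (ZMod 2) (GaloisField 2 0)) := hadj ▸ trivial
    exact Algebra.mem_bot.mp this
  obtain ⟨r, hr⟩ := hsurj
  have hrr' : ∀ s : ZMod 2, s * s = s := by decide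
  have hrr := hrr' r
  have hid : lam * lam = lam := by
    rw [← hr, ← map_mul, hrr]
  have hpow : ∀ j : ℕ, lam ^ (j+1) = lam := by
    intro j
    induction j with
    | zero => simp
    | succ j ih => rw [pow_succ, ih, hid]
  exact hlam ⟨lam, by simpa using hpow (2^t)⟩

/-- Theorem from Gold functions: under the stated conditions the function
`h*(x) = Tr(λ x^{2^t+1}) + F(Tr(α x), φ_2(x), …, φ_r(x))` is bent, where `r = k + 1` and
`φ_i(x) = Tr(λ(μ_i x^{2^t} + μ_i^{2^t} x + μ_i^{2^t+1}))`. -/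
theorem statement12 {n m k : ℕ} (hn : n = 2 * m) (t : ℕ) (ht : 0 < t)
    (hev : Even (n / Nat.gcd t n))
    (lam : GaloisField 2 n)
    (hlam : lam ∉ Set.range (fun x : GaloisField 2 n => x ^ (2 ^ t + 1)))
    (μ : Fin k → GaloisField 2 n) (hμ : ∀ i, μ i ≠ 0)
    (hij : ∀ i j : Fin k, i < j →
      Tr (lam * ((μ i) ^ (2 ^ t) * μ j + μ i * (μ j) ^ (2 ^ t))) = 0)
    (α : GaloisField 2 n) (hα : ∀ i, Tr (α * μ i) = 0)
    (F : (Fin (k + 1) → ZMod 2) → ZMod 2) :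
    IsBent m (fun x => Tr (lam * x ^ (2 ^ t + 1)) +
      F (Fin.cons (Tr (α * x))
        (fun i => Tr (lam * (μ i * x ^ (2 ^ t) + (μ i) ^ (2 ^ t) * x
          + (μ i) ^ (2 ^ t + 1)))))) := by
  classical
  rcases Nat.eq_zero_or_pos n with hn0 | hnpos
  · subst hn0
    exact (deg_case t lam hlam).elim
  have hn0 : n ≠ 0 := hnpos.ne'
  set f : GaloisField 2 n → ZMod 2 := fun x => Tr (lam * x ^ (2^t+1)) with hf
  set φ : Fin k → GaloisField 2 n → ZMod 2 :=
    fun i x => Tr (lam * (μ i * x ^ (2^t) + (μ i) ^ (2^t) * x + (μ i) ^ (2^t+1))) with hφ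
  set ℓ : GaloisField 2 n → (Fin (k+1) → ZMod 2) :=
    fun x => Fin.cons (Tr (α * x)) (fun i => φ i x) with hℓ
  intro ν0
  -- basic embeddings
  set e : ZMod 2 → GaloisField 2 n := fun b => algebraMap (ZMod 2) (GaloisField 2 n) b with he
  have he0 : e 0 = 0 := map_zero _
  have he1 : e 1 = 1 := map_one _
  have heq : ∀ b, e b ^ (2^t) = e b := by
    intro b
    rcases zmod2_cases b with hb | hb <;> subst hb
    · rw [he0, zero_pow (by positivity)]
    · rw [he1, one_pow]
  have hTre : ∀ b (y : GaloisField 2 n), Tr (e b * y) = b * Tr y := by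
    intro b y
    rcases zmod2_cases b with hb | hb <;> subst hb
    · rw [he0, zero_mul, zero_mul]
      simp [Tr]
    · rw [he1, one_mul, one_mul]
  -- expansion of f
  have Efz : ∀ x z : GaloisField 2 n, f (x+z) =
      f x + f z + (Tr (lam*(x^(2^t)*z)) + Tr (lam*(x*z^(2^t)))) := by
    intro x z
    show Tr _ = _
    have hfr : (x+z)^(2^t) = x^(2^t) + z^(2^t) := add_pow_char_pow x z 2 t
    have hee : lam*(x+z)^(2^t+1) =
        lam*x^(2^t+1) + lam*z^(2^t+1) + (lam*(x^(2^t)*z) + lam*(x*z^(2^t))) := by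
      rw [pow_succ, hfr, pow_succ, pow_succ]
      ring
    rw [hee, Tr_add, Tr_add, Tr_add]
  have hphi : ∀ i x, φ i x =
      Tr (lam*(x^(2^t) * μ i)) + Tr (lam*(x * (μ i)^(2^t))) + f (μ i) := by
    intro i x
    show Tr _ = _
    have : lam * (μ i * x ^ (2^t) + (μ i) ^ (2^t) * x + (μ i) ^ (2^t+1)) =
        lam*(x^(2^t) * μ i) + lam*(x * (μ i)^(2^t)) + lam * (μ i)^(2^t+1) := by ring
    rw [this, Tr_add, Tr_add]
  have hsym : ∀ i j : Fin k, i ≠ j →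
      Tr (lam * ((μ i) ^ (2^t) * μ j + μ i * (μ j) ^ (2^t))) = 0 := by
    intro i j hij'
    rcases lt_or_gt_of_ne hij' with h | h
    · exact hij i j h
    · have := hij j i h
      rw [show lam * ((μ i) ^ (2^t) * μ j + μ i * (μ j) ^ (2^t)) =
          lam * ((μ j) ^ (2^t) * μ i + μ j * (μ i) ^ (2^t)) by ring]
      exact this
  have hstep1 : ∀ (b : ZMod 2) i (x : GaloisField 2 n),
      f (x + e b * μ i) = f x + b * φ i x := by
    intro b i x
    rcases zmod2_cases b with hb | hb <;> subst hb
    · rw [he0, zero_mul, add_zero, zero_mul, add_zero]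
    · rw [he1, one_mul, one_mul, Efz x (μ i), hphi i x]
      ring
  have hstep2 : ∀ (b : ZMod 2) (i j : Fin k) (x : GaloisField 2 n), i ≠ j →
      φ j (x + e b * μ i) = φ j x := by
    intro b i j x hij'
    show Tr _ = Tr _
    have hfr : (x + e b * μ i)^(2^t) = x^(2^t) + e b * (μ i)^(2^t) := by
      rw [add_pow_char_pow x _ 2 t, mul_pow, heq]
    have harg : lam * (μ j * (x + e b * μ i) ^ (2^t) + (μ j) ^ (2^t) * (x + e b * μ i)
          + (μ j) ^ (2^t+1)) =
        lam * (μ j * x ^ (2^t) + (μ j) ^ (2^t) * x + (μ j) ^ (2^t+1))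
          + e b * (lam * ((μ j) ^ (2^t) * μ i + μ j * (μ i) ^ (2^t))) := by
      rw [hfr]; ring
    rw [harg, Tr_add, hTre, hsym j i (Ne.symm hij'), mul_zero, add_zero]
  -- the master shift lemma
  have KeyG : ∀ (bb : Fin k → ZMod 2) (s : Finset (Fin k)) (x : GaloisField 2 n),
      f (x + ∑ i ∈ s, e (bb i) * μ i) = f x + ∑ i ∈ s, bb i * φ i x := by
    intro bb s
    induction s using Finset.induction_on with
    | empty => intro x; simp
    | insert i s hins ih =>
      intro x
      rw [Finset.sum_insert hins, Finset.sum_insert hins]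
      have : x + (e (bb i) * μ i + ∑ j ∈ s, e (bb j) * μ j)
          = (x + e (bb i) * μ i) + ∑ j ∈ s, e (bb j) * μ j := by ring
      rw [this, ih (x + e (bb i) * μ i), hstep1]
      have : ∀ j ∈ s, bb j * φ j (x + e (bb i) * μ i) = bb j * φ j x := by
        intro j hj
        rw [hstep2 (bb i) i j x (fun hh => hins (hh ▸ hj))]
      rw [Finset.sum_congr rfl this]
      ring
  -- setup per-u data
  set cu : (Fin (k+1) → ZMod 2) → GaloisField 2 n :=
    fun u => ∑ i : Fin k, e (u i.succ) * μ i with hcu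
  set ν : (Fin (k+1) → ZMod 2) → GaloisField 2 n := fun u => ν0 + e (u 0) * α with hν
  have hshift : ∀ u (x : GaloisField 2 n),
      f (x + cu u) = f x + ∑ i : Fin k, u i.succ * φ i x :=
    fun u x => KeyG (fun i => u i.succ) Finset.univ x
  have hdotl : ∀ (u : Fin (k+1) → ZMod 2) x,
      (∑ j, u j * (ℓ x) j) = u 0 * Tr (α*x) + ∑ i : Fin k, u i.succ * φ i x := by
    intro u x
    rw [Fin.sum_univ_succ]
    simp [hℓ]
  have hTrν : ∀ u (x : GaloisField 2 n),
      Tr (ν u * x) = Tr (ν0 * x) + u 0 * Tr (α * x) := by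
    intro u x
    rw [hν]
    show Tr ((ν0 + e (u 0) * α) * x) = _
    rw [show (ν0 + e (u 0) * α) * x = ν0 * x + e (u 0) * (α * x) by ring, Tr_add, hTre]
  -- dual function
  have hbent : IsBent m f := gold_bent hn hn0 ht lam hlam
  set fs : GaloisField 2 n → ZMod 2 := fun w => if walsh f w = 2^m then 0 else 1 with hfs
  have hdual : ∀ w, walsh f w = 2^m * sgn (fs w) := by
    intro w
    rcases hbent w with h | h
    · rw [hfs]
      simp only [h, if_pos rfl]
      simp [sgn]
    · have hne : walsh f w ≠ 2^m := by
        rw [h]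
        have : (0:ℤ) < 2^m := by positivity
        omega
      rw [hfs]
      simp only [hne, if_neg hne]
      rw [h]
      simp [sgn]
  -- claim 1
  have claim1 : ∀ u, (∑ x : GaloisField 2 n, sgn (f x + Tr (ν0*x) + (∑ j, u j * ℓ x j)))
      = sgn (Tr (ν u * cu u)) * walsh f (ν u) := by
    intro u
    have hexp : ∀ x : GaloisField 2 n, f x + Tr (ν0*x) + (∑ j, u j * ℓ x j)
        = f (x + cu u) + Tr (ν u * x) := by
      intro x
      rw [hdotl, hTrν, hshift]
      ring
    simp_rw [hexp]
    have hre : ∑ x : GaloisField 2 n, sgn (f (x + cu u) + Tr (ν u * x))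
        = ∑ y : GaloisField 2 n, sgn (Tr (ν u * cu u) + (f y + Tr (ν u * y))) := by
      apply Fintype.sum_equiv (Equiv.addRight (cu u))
      intro y
      show sgn (f (y + cu u) + Tr (ν u * y)) =
        sgn (Tr (ν u * cu u) + (f (y + cu u) + Tr (ν u * (y + cu u))))
      congr 1
      rw [mul_add, Tr_add]
      have harr : Tr (ν u * cu u) + (f (y + cu u) + (Tr (ν u * y) + Tr (ν u * cu u)))
          = (f (y + cu u) + Tr (ν u * y)) + (Tr (ν u * cu u) + Tr (ν u * cu u)) := by ring
      rw [harr, CharTwo.add_self_eq_zero, add_zero]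
    rw [hre]
    have hout : ∀ y : GaloisField 2 n,
        sgn (Tr (ν u * cu u) + (f y + Tr (ν u * y)))
        = sgn (Tr (ν u * cu u)) * sgn (f y + Tr (ν u * y)) := fun y => sgn_add _ _
    simp_rw [hout]
    rw [← Finset.mul_sum]
    rfl
  -- claim 2
  have claim2 : ∀ u, Tr (ν u * cu u) = ∑ i : Fin k, u i.succ * Tr (ν0 * μ i) := by
    intro u
    have h1 : ν u * cu u = ν0 * cu u + e (u 0) * (α * cu u) := by rw [hν]; ring
    have h2 : ∀ w : GaloisField 2 n, w * cu u = ∑ i : Fin k, e (u i.succ) * (w * μ i) := by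
      intro w
      rw [hcu, Finset.mul_sum]
      apply Finset.sum_congr rfl
      intro i _
      ring
    have h3 : ∀ w : GaloisField 2 n, Tr (w * cu u) = ∑ i : Fin k, u i.succ * Tr (w * μ i) := by
      intro w
      rw [h2, Tr_sum]
      apply Finset.sum_congr rfl
      intro i _
      rw [hTre]
    rw [h1, Tr_add, hTre, h3, h3]
    have h4 : ∑ i : Fin k, u i.succ * Tr (α * μ i) = 0 := by
      apply Finset.sum_eq_zero
      intro i _
      rw [hα i, mul_zero]
    rw [h4, mul_zero, add_zero]
  -- claim 3
  set bstar : Fin (k+1) → ZMod 2 :=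
    Fin.cons (fs (ν0 + α) + fs ν0) (fun i => Tr (ν0 * μ i)) with hbstar
  have claim3 : ∀ u, fs (ν u) + Tr (ν u * cu u) = fs ν0 + ∑ j, u j * bstar j := by
    intro u
    have hdb : ∑ j, u j * bstar j
        = u 0 * (fs (ν0 + α) + fs ν0) + ∑ i : Fin k, u i.succ * Tr (ν0 * μ i) := by
      rw [Fin.sum_univ_succ]
      simp [hbstar]
    have hν' : fs (ν u) = fs ν0 + u 0 * (fs (ν0 + α) + fs ν0) := by
      have hb : ν u = ν0 + e (u 0) * α := rfl
      rw [hb]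
      rcases zmod2_cases (u 0) with h0 | h0 <;> rw [h0]
      · rw [he0, zero_mul, add_zero, zero_mul, add_zero]
      · rw [he1, one_mul, one_mul]
        have : ∀ a b : ZMod 2, a + (b + a) = b := by decide
        exact (this (fs ν0) (fs (ν0 + α))).symm
    rw [claim2, hdb, hν']
    ring
  -- claim 4 : Fourier inversion
  set Cu : (Fin (k+1) → ZMod 2) → ℤ := fun u => ∑ w, sgn (F w + ∑ j, u j * w j) with hCu
  have hfun : ∀ w v : Fin (k+1) → ZMod 2, w + v = 0 → w = v := by
    intro w v h
    funext j
    have := congrFun h j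
    revert this
    have : ∀ a b : ZMod 2, a + b = 0 → a = b := by decide
    exact fun hh => this _ _ hh
  have hcardpi : (Fintype.card (Fin (k+1) → ZMod 2) : ℤ) = 2^(k+1) := by
    simp [Fintype.card_fun]
  have claim4 : ∀ v : Fin (k+1) → ZMod 2,
      (∑ u : Fin (k+1) → ZMod 2, Cu u * sgn (∑ j, u j * v j)) = 2^(k+1) * sgn (F v) := by
    intro v
    have h1 : ∀ u : Fin (k+1) → ZMod 2, Cu u * sgn (∑ j, u j * v j)
        = ∑ w, sgn (F w) * sgn (∑ j, u j * (w j + v j)) := by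
      intro u
      rw [hCu]
      simp only []
      rw [Finset.sum_mul]
      apply Finset.sum_congr rfl
      intro w _
      rw [sgn_add]
      have : (∑ j, u j * w j) + (∑ j, u j * v j) = ∑ j, u j * (w j + v j) := by
        rw [← Finset.sum_add_distrib]
        apply Finset.sum_congr rfl
        intro j _
        ring
      rw [mul_assoc, ← sgn_add, this]
    simp_rw [h1]
    rw [Finset.sum_comm]
    have h2 : ∀ w : Fin (k+1) → ZMod 2,
        (∑ u : Fin (k+1) → ZMod 2, sgn (F w) * sgn (∑ j, u j * (w j + v j)))
        = sgn (F w) * (if w = v then (2:ℤ)^(k+1) else 0) := by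
      intro w
      rw [← Finset.mul_sum]
      congr 1
      by_cases hwv : w = v
      · subst hwv
        rw [if_pos rfl]
        have : ∀ j, w j + w j = 0 := fun j => CharTwo.add_self_eq_zero _
        have hz : ∀ u : Fin (k+1) → ZMod 2, (∑ j, u j * (w j + w j)) = 0 := by
          intro u
          apply Finset.sum_eq_zero
          intro j _
          rw [this j, mul_zero]
        simp_rw [hz]
        show ∑ _u : Fin (k+1) → ZMod 2, (1:ℤ) = _
        rw [Finset.sum_const, Finset.card_univ]
        simp [hcardpi]
      · rw [if_neg hwv]
        have hne : (fun j => w j + v j) ≠ 0 := by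
          intro hh
          exact hwv (hfun w v (funext (fun j => congrFun hh j)))
        exact char_sum_pi_ne _ hne
    simp_rw [h2, mul_ite, mul_zero]
    rw [Finset.sum_ite_eq' Finset.univ v (fun w => sgn (F w) * 2^(k+1))]
    simp [mul_comm]
  -- final assembly
  have hsplit : ∀ x : GaloisField 2 n,
      sgn ((f x + F (ℓ x)) + Tr (ν0 * x)) = sgn (F (ℓ x)) * sgn (f x + Tr (ν0 * x)) := by
    intro x
    rw [show (f x + F (ℓ x)) + Tr (ν0 * x) = F (ℓ x) + (f x + Tr (ν0 * x)) by ring, sgn_add]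
  have hw : walsh (fun x => f x + F (ℓ x)) ν0
      = ∑ x : GaloisField 2 n, sgn (F (ℓ x)) * sgn (f x + Tr (ν0 * x)) := by
    rw [walsh]
    apply Finset.sum_congr rfl
    intro x _
    exact hsplit x
  have key : (2:ℤ)^(k+1) * walsh (fun x => f x + F (ℓ x)) ν0
      = (2:ℤ)^(k+1) * (2^m * (sgn (fs ν0) * sgn (F bstar))) := by
    rw [hw, Finset.mul_sum]
    have hx1 : ∀ x : GaloisField 2 n,
        (2:ℤ)^(k+1) * (sgn (F (ℓ x)) * sgn (f x + Tr (ν0 * x)))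
        = ∑ u : Fin (k+1) → ZMod 2, Cu u * (sgn (∑ j, u j * ℓ x j) * sgn (f x + Tr (ν0 * x))) := by
      intro x
      have hra : ∀ u : Fin (k+1) → ZMod 2,
          Cu u * (sgn (∑ j, u j * ℓ x j) * sgn (f x + Tr (ν0*x)))
          = (Cu u * sgn (∑ j, u j * ℓ x j)) * sgn (f x + Tr (ν0*x)) := fun u => by ring
      simp_rw [hra]
      rw [← Finset.sum_mul, claim4 (ℓ x)]
      ring
    simp_rw [hx1]
    rw [Finset.sum_comm]
    have hx2 : ∀ u : Fin (k+1) → ZMod 2,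
        (∑ x : GaloisField 2 n, Cu u * (sgn (∑ j, u j * ℓ x j) * sgn (f x + Tr (ν0 * x))))
        = Cu u * (2^m * sgn (fs ν0 + ∑ j, u j * bstar j)) := by
      intro u
      rw [← Finset.mul_sum]
      congr 1
      have : ∀ x : GaloisField 2 n, sgn (∑ j, u j * ℓ x j) * sgn (f x + Tr (ν0 * x))
          = sgn (f x + Tr (ν0*x) + (∑ j, u j * ℓ x j)) := by
        intro x
        rw [sgn_add (f x + Tr (ν0*x)) (∑ j, u j * ℓ x j), mul_comm]
      simp_rw [this]
      rw [claim1 u, hdual (ν u), ← claim3 u, sgn_add]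
      ring
    simp_rw [hx2]
    have hx3 : ∀ u : Fin (k+1) → ZMod 2,
        Cu u * (2^m * sgn (fs ν0 + ∑ j, u j * bstar j))
        = (2^m * sgn (fs ν0)) * (Cu u * sgn (∑ j, u j * bstar j)) := by
      intro u
      rw [sgn_add]
      ring
    simp_rw [hx3]
    rw [← Finset.mul_sum, claim4 bstar]
    ring
  have hcanc : walsh (fun x => f x + F (ℓ x)) ν0 = 2^m * (sgn (fs ν0) * sgn (F bstar)) :=
    mul_left_cancel₀ (by positivity : ((2:ℤ)^(k+1)) ≠ 0) key
  have habs : walsh (fun x => Tr (lam * x ^ (2 ^ t + 1)) +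
      F (Fin.cons (Tr (α * x))
        (fun i => Tr (lam * (μ i * x ^ (2 ^ t) + (μ i) ^ (2 ^ t) * x
          + (μ i) ^ (2 ^ t + 1)))))) ν0 = 2^m * (sgn (fs ν0) * sgn (F bstar)) := hcanc
  rw [habs]
  rcases sgn_cases (fs ν0) with h1 | h1 <;> rcases sgn_cases (F bstar) with h2 | h2 <;>
    rw [h1, h2]
  · left; ring
  · right; ring
  · right; ring
  · left; ring

end
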